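/- Let F be a field of characteristic p > 3 containing F_q, q an odd power of p, and let E: y² = x³ + t^q − t over F(t). For every affine point P on E with x-coordinate in lowest terms f/g, the naive height satisfies h(2P) = 4·h(P), where h(P) = deg(f). -/

import Mathlib

open Polynomial

/-- The naive height of a point on an elliptic curve over `F(t)`: it is `0` at the point
at infinity, and `deg f` at an affine point with `x`-coordinate `f/g` in lowest terms. -/
noncomputable def naiveHeight {F : Type*} [Field F]
    {W : WeierstrassCurve.Affine (RatFunc F)} : W.Point → ℕ
  | .zero => 0
  | @WeierstrassCurve.Affine.Point.some _ _ _ x _ _ => x.num.natDegree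

lemma dup_x_formula {K : Type*} [Field K] (x y a : K) (hy : y ≠ 0) (h2 : (2:K) ≠ 0)
    (h4 : (4:K) ≠ 0) (hE : y^2 = x^3 + a) :
    (3*x^2/(2*y))^2 + 0 * (3*x^2/(2*y)) - 0 - x - x = (x^4 - 8*a*x)/(4*(x^3 + a)) := by
  rw [← hE]
  field_simp
  ring_nf
  linear_combination (-32 * x) * hE

lemma naiveHeight_some {F : Type*} [Field F] {W : WeierstrassCurve.Affine (RatFunc F)}
    {x y : RatFunc F} (h : W.Nonsingular x y) :
    naiveHeight (WeierstrassCurve.Affine.Point.some x y h) = x.num.natDegree := rfl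

open Classical in
/-- For `F` of characteristic `p > 3` containing `F_q` (`q` an odd `p`-power)
and `E : y² = x³ + t^q − t` over `F(t)`, every affine point `P` satisfies
`h(2P) = 4·h(P)`, where `h` is the naive height. -/
theorem naive_height_duplication (p c q : ℕ) [Fact p.Prime] (hp3 : 3 < p)
    (hc : Odd c) (hq : q = p ^ c)
    (F : Type*) [Field F] [CharP F p] (φ : GaloisField p c →+* F)
    (W : WeierstrassCurve.Affine (RatFunc F))
    (hW : W = ⟨0, 0, 0, 0,
      algebraMap (Polynomial F) (RatFunc F) (X ^ q - X)⟩)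
    (x y : RatFunc F) (h : W.Nonsingular x y) :
    naiveHeight (2 • (WeierstrassCurve.Affine.Point.some x y h : W.Point)) =
      4 * naiveHeight (WeierstrassCurve.Affine.Point.some x y h : W.Point) := by
  subst hW
  classical
  have hp := (Fact.out : p.Prime)
  set ι := algebraMap (Polynomial F) (RatFunc F) with hι
  have hinj : Function.Injective ι := RatFunc.algebraMap_injective F
  -- basic numerical facts
  have hc1 : 1 ≤ c := hc.pos
  have hq1 : 1 < q := by
    rw [hq]; calc 1 < p := by omega
    _ ≤ p ^ c := Nat.le_self_pow (by omega) p
  have hqodd : Odd q := by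
    rw [hq]; exact (hp.odd_of_ne_two (by omega)).pow
  have hq3 : ¬ (3 ∣ q) := by
    rw [hq]; intro h3
    have := (Nat.prime_three.dvd_of_dvd_pow h3)
    have := (Nat.prime_dvd_prime_iff_eq Nat.prime_three hp).mp this
    omega
  -- characteristic facts
  have hcharF : ∀ n : ℕ, ¬ (p ∣ n) → (n : F) ≠ 0 := fun n hn h0 =>
    hn ((CharP.cast_eq_zero_iff F p n).mp h0)
  have hp2 : ¬ p ∣ 2 := fun hd => by have := (Nat.prime_dvd_prime_iff_eq hp Nat.prime_two).mp hd; omega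
  have hp3' : ¬ p ∣ 3 := fun hd => by have := (Nat.prime_dvd_prime_iff_eq hp Nat.prime_three).mp hd; omega
  have hp4 : ¬ p ∣ 4 := by
    intro hd; exact hp2 (hp.dvd_of_dvd_pow (show p ∣ 2 ^ 2 by norm_num; exact hd))
  have hp8 : ¬ p ∣ 8 := by
    intro hd; exact hp2 (hp.dvd_of_dvd_pow (show p ∣ 2 ^ 3 by norm_num; exact hd))
  have hp9 : ¬ p ∣ 9 := by
    intro hd; exact hp3' (hp.dvd_of_dvd_pow (show p ∣ 3 ^ 2 by norm_num; exact hd))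
  have h2F : (2 : F) ≠ 0 := by have := hcharF 2 hp2; exact_mod_cast this
  have h4P : IsUnit (4 : Polynomial F) := by
    have h4F : (4 : F) ≠ 0 := by have := hcharF 4 hp4; exact_mod_cast this
    have h44 : (4 : Polynomial F) = C (4 : F) := (map_ofNat (C : F →+* Polynomial F) 4).symm
    rw [h44]; exact isUnit_C.mpr (isUnit_iff_ne_zero.mpr h4F)
  have h9P : IsUnit (9 : Polynomial F) := by
    have h9F : (9 : F) ≠ 0 := by have := hcharF 9 hp9; exact_mod_cast this
    have h99 : (9 : Polynomial F) = C (9 : F) := (map_ofNat (C : F →+* Polynomial F) 9).symm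
    rw [h99]; exact isUnit_C.mpr (isUnit_iff_ne_zero.mpr h9F)
  have hcharK : CharP (RatFunc F) p :=
    charP_of_injective_algebraMap (algebraMap F (RatFunc F)).injective p
  have hcharK' : ∀ n : ℕ, ¬ (p ∣ n) → (n : RatFunc F) ≠ 0 := fun n hn h0 =>
    hn ((CharP.cast_eq_zero_iff (RatFunc F) p n).mp h0)
  have h2K : (2 : RatFunc F) ≠ 0 := by have := hcharK' 2 hp2; exact_mod_cast this
  have h4K : (4 : RatFunc F) ≠ 0 := by have := hcharK' 4 hp4; exact_mod_cast this
  -- facts about (X ^ q - X)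
  have hAdeg : ((X : Polynomial F) ^ q - X).natDegree = q := by
    rw [natDegree_sub_eq_left_of_natDegree_lt (by simp [natDegree_X_pow, natDegree_X]; omega),
      natDegree_X_pow]
  have hA0 : ((X : Polynomial F) ^ q - X) ≠ 0 := by intro h0; rw [h0, natDegree_zero] at hAdeg; omega
  -- the curve equation
  have hE : y ^ 2 = x ^ 3 + ι (X ^ q - X) := by
    have he := ((WeierstrassCurve.Affine.nonsingular_iff x y).mp h).1
    rw [WeierstrassCurve.Affine.equation_iff] at he
    simpa using he
  set f := x.num with hf
  set g := x.denom with hg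
  set u := y.num with hu
  set v := y.denom with hv
  have hg0 : g ≠ 0 := x.denom_ne_zero
  have hv0 : v ≠ 0 := y.denom_ne_zero
  have hgK : ι g ≠ 0 := fun h0 => hg0 (hinj (by simpa using h0))
  have hvK : ι v ≠ 0 := fun h0 => hv0 (hinj (by simpa using h0))
  have hxf : ι f = x * ι g := (div_eq_iff hgK).mp (x.num_div_denom)
  have hyu : ι u = y * ι v := (div_eq_iff hvK).mp (y.num_div_denom)
  have keyK : (ι u)^2 * (ι g)^3 = (ι v)^2 * ((ι f)^3 + ι (X ^ q - X) * (ι g)^3) := by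
    linear_combination ((ι v)^2 * (ι g)^3) * hE + ((ι u) + y * (ι v)) * (ι g)^3 * hyu -
      (ι v)^2 * ((ι f)^2 + (ι f) * (x * ι g) + (x * ι g)^2) * hxf
  have keyP : u^2 * g^3 = v^2 * (f^3 + (X ^ q - X) * g^3) := by
    apply hinj; simp only [map_mul, map_pow, map_add]; exact keyK
  -- y is nonzero
  have hy0 : y ≠ 0 := by
    intro h0
    have hP : f^3 + (X ^ q - X) * g^3 = 0 := by
      apply hinj
      simp only [map_add, map_mul, map_pow, map_zero]
      have hE0 : (0 : RatFunc F) = x^3 + ι (X ^ q - X) := by simpa [h0] using hE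
      linear_combination -(ι g)^3 * hE0 + ((ι f)^2 + (ι f) * (x * ι g) + (x * ι g)^2) * hxf
    have hf0 : f ≠ 0 := by
      intro hf0
      rw [hf0] at hP
      norm_num at hP
      rcases hP with hP | hP
      · exact hA0 hP
      · exact hg0 hP
    have hfeq : f^3 = -((X ^ q - X) * g^3) := by linear_combination hP
    have hdeg := congrArg natDegree hfeq
    rw [natDegree_pow, natDegree_neg, natDegree_mul hA0 (pow_ne_zero 3 hg0), natDegree_pow,
      hAdeg] at hdeg
    exact hq3 (by omega)
  have hu0 : u ≠ 0 := RatFunc.num_ne_zero hy0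
  have hcfg : IsCoprime f g := x.isCoprime_num_denom
  have hcuv : IsCoprime u v := y.isCoprime_num_denom
  set S : Polynomial F := f^3 + (X ^ q - X) * g^3 with hSdef
  have hS0 : S ≠ 0 := by
    intro h0
    have hz : u^2 * g^3 = 0 := by rw [keyP, h0, mul_zero]
    exact (mul_ne_zero (pow_ne_zero 2 hu0) (pow_ne_zero 3 hg0)) hz
  have hgS : IsCoprime g S := by
    obtain ⟨m, n, hmn⟩ := hcfg.symm.pow_right (n := 3)
    exact ⟨m - n * ((X ^ q - X) * g^2), n, by rw [hSdef]; linear_combination hmn⟩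
  have hv2g3 : v^2 ∣ g^3 := by
    have hdvd : v^2 ∣ u^2 * g^3 := by rw [keyP]; exact dvd_mul_right _ _
    exact (hcuv.symm.pow (m := 2) (n := 2)).dvd_of_dvd_mul_left hdvd
  have hg3v2 : g^3 ∣ v^2 := by
    have hdvd : g^3 ∣ v^2 * S := by rw [← keyP]; exact dvd_mul_left _ _
    exact (hgS.pow_left (m := 3)).dvd_of_dvd_mul_right hdvd
  have hdegvg : 2 * v.natDegree = 3 * g.natDegree := by
    have h1 := Polynomial.natDegree_le_of_dvd hv2g3 (pow_ne_zero 3 hg0)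
    have h2 := Polynomial.natDegree_le_of_dvd hg3v2 (pow_ne_zero 2 hv0)
    rw [natDegree_pow, natDegree_pow] at h1 h2
    omega
  -- S is associated to u^2
  have hassS : Associated (u^2) S := by
    obtain ⟨e, he⟩ := associated_of_dvd_dvd hv2g3 hg3v2
    refine ⟨e, ?_⟩
    have hcan : (u^2 * e) * v^2 = S * v^2 := by
      calc (u^2 * e) * v^2 = u^2 * (v^2 * e) := by ring
      _ = u^2 * g^3 := by rw [he]
      _ = S * v^2 := by linear_combination keyP
    exact mul_right_cancel₀ (pow_ne_zero 2 hv0) hcan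
  have hdegSu : S.natDegree = 2 * u.natDegree := by
    obtain ⟨e, he⟩ := hassS
    rw [← he, natDegree_mul (pow_ne_zero 2 hu0) e.ne_zero, natDegree_pow,
      Polynomial.natDegree_eq_zero_of_isUnit e.isUnit]
    ring
  -- the key degree inequality : 3 deg f > q + 3 deg g
  have hmain : q + 3 * g.natDegree < 3 * f.natDegree := by
    by_contra hle
    push_neg at hle
    rcases Nat.lt_or_ge (3 * f.natDegree) (q + 3 * g.natDegree) with hlt | hge
    · have hdeg3 : (f^3).natDegree < ((X ^ q - X) * g^3).natDegree := by
        rw [natDegree_pow, natDegree_mul hA0 (pow_ne_zero 3 hg0), natDegree_pow, hAdeg]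
        omega
      have : S.natDegree = q + 3 * g.natDegree := by
        rw [hSdef, natDegree_add_eq_right_of_natDegree_lt hdeg3,
          natDegree_mul hA0 (pow_ne_zero 3 hg0), natDegree_pow, hAdeg]
      rw [hdegSu] at this
      obtain ⟨k, hk⟩ := hqodd
      omega
    · have : 3 * f.natDegree = q + 3 * g.natDegree := by omega
      exact hq3 (by omega)
  have hdegS : S.natDegree = 3 * f.natDegree := by
    rw [hSdef, natDegree_add_eq_left_of_natDegree_lt (by
      rw [natDegree_pow, natDegree_mul hA0 (pow_ne_zero 3 hg0), natDegree_pow, hAdeg]; omega),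
      natDegree_pow]
  have hf0 : f ≠ 0 := by
    intro h0
    rw [h0, natDegree_zero] at hmain
    omega
  -- (X ^ q - X) is squarefree
  have hAsf : Squarefree ((X : Polynomial F) ^ q - X) := by
    apply Polynomial.Separable.squarefree
    rw [Polynomial.separable_def]
    have hqF : ((q : F)) = 0 := (CharP.cast_eq_zero_iff F p q).mpr (hq ▸ dvd_pow_self p (by omega))
    have hd : derivative ((X : Polynomial F) ^ q - X) = -1 := by
      rw [derivative_sub, derivative_X_pow, derivative_X, hqF, map_zero, zero_mul, zero_sub]
    rw [hd]
    exact ⟨0, -1, by ring⟩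
  -- numerator and denominator of x(2P)
  set N : Polynomial F := f^4 - 8*(X ^ q - X)*f*g^3 with hNdef
  set D : Polynomial F := 4*(g*S) with hDdef
  have h8P0 : (8 : Polynomial F) ≠ 0 := by
    have h8F : (8 : F) ≠ 0 := by have := hcharF 8 hp8; exact_mod_cast this
    have h88 : (8 : Polynomial F) = C (8 : F) := (map_ofNat (C : F →+* Polynomial F) 8).symm
    rw [h88]; simpa using h8F
  have h8deg : (8 : Polynomial F).natDegree = 0 := by
    have h88 : (8 : Polynomial F) = C (8 : F) := (map_ofNat (C : F →+* Polynomial F) 8).symm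
    rw [h88, natDegree_C]
  have hD0 : D ≠ 0 := by
    rw [hDdef]; exact mul_ne_zero h4P.ne_zero (mul_ne_zero hg0 hS0)
  have hsubdeg : (8*(X ^ q - X)*f*g^3 : Polynomial F).natDegree = q + f.natDegree + 3 * g.natDegree := by
    rw [natDegree_mul (mul_ne_zero (mul_ne_zero h8P0 hA0) hf0) (pow_ne_zero 3 hg0),
      natDegree_mul (mul_ne_zero h8P0 hA0) hf0, natDegree_mul h8P0 hA0, h8deg, hAdeg,
      natDegree_pow]
    ring
  have hNdeg : N.natDegree = 4 * f.natDegree := by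
    rw [hNdef, natDegree_sub_eq_left_of_natDegree_lt (by rw [hsubdeg, natDegree_pow]; omega),
      natDegree_pow]
  have hN0 : N ≠ 0 := by
    intro h0
    rw [h0, natDegree_zero] at hNdeg
    omega
  -- coprimality of N and S
  have hNS : IsCoprime N S := by
    by_contra hns
    have hgcdu : ¬ IsUnit (gcd N S) := fun hu => hns ((gcd_isUnit_iff N S).mp hu)
    have hgcd0 : gcd N S ≠ 0 := fun h0 => hS0 (((gcd_eq_zero_iff N S).mp h0).2)
    obtain ⟨π, hπirr, hπdvd⟩ := WfDvdMonoid.exists_irreducible_factor hgcdu hgcd0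
    have hπN : π ∣ N := hπdvd.trans (gcd_dvd_left N S)
    have hπS : π ∣ S := hπdvd.trans (gcd_dvd_right N S)
    have hπp : Prime π := hπirr.prime
    have hSf : S - (X ^ q - X) * g^3 = f^3 := by rw [hSdef]; ring
    have hSA : S - f^3 = (X ^ q - X) * g^3 := by rw [hSdef]; ring
    have hπg : ¬ π ∣ g := by
      intro hg'
      have hπf3 : π ∣ f^3 := by
        rw [← hSf]
        exact dvd_sub hπS ((dvd_pow hg' (by norm_num)).mul_left (X ^ q - X))
      exact hπirr.not_isUnit (hcfg.isUnit_of_dvd' (hπp.dvd_of_dvd_pow hπf3) hg')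
    have hπAfg : π ∣ (X ^ q - X) * f * g^3 := by
      have h1' : π ∣ f * S - N := dvd_sub (hπS.mul_left f) hπN
      have he' : f * S - N = 9 * ((X ^ q - X) * f * g^3) := by rw [hSdef, hNdef]; ring
      rw [he'] at h1'
      rcases hπp.dvd_mul.mp h1' with h9 | hok
      · exact absurd (isUnit_of_dvd_unit h9 h9P) hπirr.not_isUnit
      · exact hok
    have hπA : π ∣ (X ^ q - X) := by
      rcases hπp.dvd_mul.mp hπAfg with hAf | hg3
      · rcases hπp.dvd_mul.mp hAf with hA' | hf'
        · exact hA'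
        · have : π ∣ (X ^ q - X) * g^3 := by rw [← hSA]; exact dvd_sub hπS (dvd_pow hf' (by norm_num))
          rcases hπp.dvd_mul.mp this with hA' | hg3
          · exact hA'
          · exact absurd (hπp.dvd_of_dvd_pow hg3) hπg
      · exact absurd (hπp.dvd_of_dvd_pow hg3) hπg
    have hπf : π ∣ f := by
      have : π ∣ f^3 := by rw [← hSf]; exact dvd_sub hπS (hπA.mul_right _)
      exact hπp.dvd_of_dvd_pow this
    have hπu : π ∣ u := hπp.dvd_of_dvd_pow (hπS.trans hassS.symm.dvd)
    have hπ2S : π^2 ∣ S := (pow_dvd_pow_of_dvd hπu 2).trans hassS.dvd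
    have hπ2Ag : π^2 ∣ (X ^ q - X) * g^3 := by
      rw [← hSA]
      exact dvd_sub hπ2S ((pow_dvd_pow π (by norm_num)).trans (pow_dvd_pow_of_dvd hπf 3))
    have hπ2A : π^2 ∣ (X ^ q - X) :=
      hπp.pow_dvd_of_dvd_mul_right 2 (fun hd => hπg (hπp.dvd_of_dvd_pow hd)) hπ2Ag
    exact hπirr.not_isUnit (hAsf π (by rw [← pow_two]; exact hπ2A))
  have hNg : IsCoprime N g := by
    have h4c : IsCoprime (N + g * (8*(X ^ q - X)*f*g^2)) g := by
      have heq : N + g * (8*(X ^ q - X)*f*g^2) = f^4 := by rw [hNdef]; ring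
      rw [heq]
      exact hcfg.pow_left
    exact h4c.of_add_mul_left_left
  have hND : IsCoprime N D := by
    rw [hDdef, isCoprime_mul_unit_left_right h4P]
    exact hNg.mul_right hNS
  -- nonzero denominators in K
  have hSK : ι S ≠ 0 := fun h0 => hS0 (hinj (by simpa using h0))
  have hDK : ι D ≠ 0 := fun h0 => hD0 (hinj (by simpa using h0))
  have hx3A : x^3 + ι (X ^ q - X) ≠ 0 := by rw [← hE]; exact pow_ne_zero 2 hy0
  -- duplication
  have hynegY : y ≠ WeierstrassCurve.Affine.negY
      ⟨0, 0, 0, 0, ι (X ^ q - X)⟩ x y := by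
    intro heq
    rw [WeierstrassCurve.Affine.negY] at heq
    simp only [mul_zero, zero_mul, sub_zero, zero_sub, neg_zero] at heq
    apply hy0
    have h2y : 2 * y = 0 := by linear_combination heq
    rcases mul_eq_zero.mp h2y with h' | h'
    · exact absurd h' h2K
    · exact h'
  have hslope : WeierstrassCurve.Affine.slope ⟨0, 0, 0, 0, ι (X ^ q - X)⟩ x x y y
      = 3 * x^2 / (2 * y) := by
    rw [WeierstrassCurve.Affine.slope_of_Y_ne rfl hynegY, WeierstrassCurve.Affine.negY]
    show (3 * x ^ 2 + 2 * 0 * x + 0 - 0 * y) / (y - (-y - 0 * x - 0)) = 3 * x ^ 2 / (2 * y)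
    rw [show (3 * x ^ 2 + 2 * 0 * x + 0 - 0 * y : RatFunc F) = 3 * x ^ 2 by ring,
      show (y - (-y - 0 * x - 0) : RatFunc F) = 2 * y by ring]
  have haddX : WeierstrassCurve.Affine.addX ⟨0, 0, 0, 0, ι (X ^ q - X)⟩ x x
      (WeierstrassCurve.Affine.slope ⟨0, 0, 0, 0, ι (X ^ q - X)⟩ x x y y) = ι N / ι D := by
    rw [hslope]
    have hstep1 := dup_x_formula x y (ι (X ^ q - X)) hy0 h2K h4K hE
    show (3*x^2/(2*y))^2 + 0 * (3*x^2/(2*y)) - 0 - x - x = ι N / ι D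
    rw [hstep1, hNdef, hDdef, hSdef]
    simp only [map_mul, map_sub, map_add, map_pow, map_ofNat]
    rw [div_eq_div_iff (by
      simpa only [map_sub, map_pow] using mul_ne_zero h4K hx3A) (by
      have hDK' := hDK
      rw [hDdef, hSdef] at hDK'
      simpa only [map_mul, map_add, map_pow, map_sub, map_ofNat] using hDK')]
    rw [hxf]
    ring
  -- putting it together
  rw [two_nsmul, WeierstrassCurve.Affine.Point.add_self_of_Y_ne hynegY,
    naiveHeight_some, naiveHeight_some, haddX]
  have hgcd1 : gcd N D = 1 := by
    rw [← normalize_gcd, normalize_eq_one]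
    exact (gcd_isUnit_iff N D).mpr hND
  rw [RatFunc.num_div, hgcd1, EuclideanDomain.div_one, EuclideanDomain.div_one,
    natDegree_C_mul (inv_ne_zero (leadingCoeff_ne_zero.mpr hD0)), hNdeg]
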